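/- Let {X_n} be a sequence of real random variables with common marginal distribution function F and let (x_n) be real numbers with n·F̄(x_n) → τ > 0, F̄(x_n) > 0 for all n. Suppose there is a sequence of positive integers q_n = o(n) such that α*_{⌈cn⌉, q_n}(x_n) → 0 for every c > 0, and let (p_n) be positive integers with p_n = o(n), q_n = o(p_n) and n·α_n = o(p_n), where α_n are the AIM mixing coefficients associated with (q_n). Set θ_{i,n} = P(M_{i,i+p_n} ≤ x_n | X_i > x_n), suppose the limits θ_i = lim_{n→∞} θ_{i,n} exist, that max_{1≤i≤⌈cn⌉} |θ_i − θ_{i,n}| → 0 for every c > 0, and that the Cesàro means (1/n) ∑_{i=1}^{n} θ_i converge to γ. Then for each fixed i ∈ ℕ and each t > 0, P(F̄(x_n)·T_i(x_n) > t | X_i > x_n) → θ_i·exp(−γt) as n → ∞. -/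

import Mathlib

open MeasureTheory Filter Finset Asymptotics

/-- Probability of an event as a real number. -/
noncomputable def pr {Ω : Type*} [MeasurableSpace Ω] (P : Measure Ω) (A : Set Ω) : ℝ :=
  (P A).toReal

/-- The event that `X i ≤ x` for every index `i` in the set `S`;
this is the event `{M(S) ≤ x}` where `M(S) = max {X i : i ∈ S}`. -/
def allLe {Ω : Type*} (X : ℕ → Ω → ℝ) (S : Set ℕ) (x : ℝ) : Set Ω :=
  {ω | ∀ i ∈ S, X i ω ≤ x}

/-- `α` is a sequence of AIM mixing coefficients for `X` relative to thresholds `xs`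
with separation sequence `q`: for any two intervals `I₁ = [a,b]`, `I₂ = [b+qₙ+1, c]`
contained in `{1,…,n}`, separated by `qₙ`, each of cardinality at least `qₙ`,
the maximum-based discrepancy is bounded by `α n`. -/
def AIMBound {Ω : Type*} [MeasurableSpace Ω] (P : Measure Ω) (X : ℕ → Ω → ℝ)
    (xs : ℕ → ℝ) (q : ℕ → ℕ) (α : ℕ → ℝ) : Prop :=
  ∀ n a b c : ℕ, 1 ≤ a → a ≤ b → b + q n + 1 ≤ c → c ≤ n →
    q n ≤ b + 1 - a → q n ≤ c - (b + q n) →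
    |pr P (allLe X (Set.Icc a b ∪ Set.Icc (b + q n + 1) c) (xs n)) -
      pr P (allLe X (Set.Icc a b) (xs n)) *
        pr P (allLe X (Set.Icc (b + q n + 1) c) (xs n))| ≤ α n

/-- The σ-algebra generated by the exceedance events `{X i > u}` for `j₁ ≤ i ≤ j₂`. -/
def excSigma {Ω : Type*} (X : ℕ → Ω → ℝ) (u : ℝ) (j₁ j₂ : ℕ) : MeasurableSpace Ω :=
  MeasurableSpace.generateFrom {S | ∃ i : ℕ, j₁ ≤ i ∧ i ≤ j₂ ∧ S = {ω | u < X i ω}}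

set_option linter.unusedSectionVars false
set_option linter.unusedVariables false
set_option maxHeartbeats 1000000

section PrBasics
variable {Ω : Type*} [MeasurableSpace Ω] (P : Measure Ω) [IsProbabilityMeasure P]

lemma pr_nonneg (A : Set Ω) : 0 ≤ pr P A := ENNReal.toReal_nonneg

lemma pr_mono {A B : Set Ω} (h : A ⊆ B) : pr P A ≤ pr P B :=
  ENNReal.toReal_mono (measure_ne_top P B) (measure_mono h)

lemma pr_univ : pr P (Set.univ) = 1 := by simp [pr]

lemma pr_le_one (A : Set Ω) : pr P A ≤ 1 := by
  simpa [pr_univ P] using pr_mono P (Set.subset_univ A)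

lemma pr_split (A : Set Ω) {E : Set Ω} (hE : MeasurableSet E) :
    pr P A = pr P (A ∩ E) + pr P (A \ E) := by
  unfold pr
  rw [← ENNReal.toReal_add (measure_ne_top P _) (measure_ne_top P _),
    measure_inter_add_diff A hE]

lemma pr_compl {E : Set Ω} (hE : MeasurableSet E) : pr P Eᶜ = 1 - pr P E := by
  have h := pr_split P Set.univ hE
  rw [Set.univ_inter, Set.diff_eq, Set.univ_inter, pr_univ P] at h
  linarith

lemma pr_biUnion_le (s : Finset ℕ) (f : ℕ → Set Ω) :
    pr P (⋃ j ∈ s, f j) ≤ ∑ j ∈ s, pr P (f j) := by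
  unfold pr
  rw [← ENNReal.toReal_sum (fun a _ => measure_ne_top P _)]
  exact ENNReal.toReal_mono (by
      exact (ENNReal.sum_lt_top.mpr (fun a _ => measure_lt_top P _)).ne)
    (measure_biUnion_finset_le s f)

end PrBasics

section Meas
variable {Ω : Type*} [MeasurableSpace Ω] {X : ℕ → Ω → ℝ}

lemma allLe_eq (S : Set ℕ) (u : ℝ) :
    allLe X S u = ⋂ i ∈ S, {ω | X i ω ≤ u} := by
  ext ω; simp [allLe]

lemma measurable_exc (hmeas : ∀ i, Measurable (X i)) (s : ℕ) (u : ℝ) :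
    MeasurableSet {ω | u < X s ω} :=
  measurableSet_lt measurable_const (hmeas s)

lemma measurable_allLe (hmeas : ∀ i, Measurable (X i)) (S : Set ℕ) (u : ℝ) :
    MeasurableSet (allLe X S u) := by
  rw [allLe_eq]
  exact MeasurableSet.biInter (Set.to_countable S)
    (fun i _ => measurableSet_le (hmeas i) measurable_const)

lemma excSigma_exc {u : ℝ} {j₁ j₂ s : ℕ} (h1 : j₁ ≤ s) (h2 : s ≤ j₂) :
    MeasurableSet[excSigma X u j₁ j₂] {ω | u < X s ω} :=
  MeasurableSpace.measurableSet_generateFrom ⟨s, h1, h2, rfl⟩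

lemma excSigma_allLe {u : ℝ} {j₁ j₂ a b : ℕ} (h1 : j₁ ≤ a) (h2 : b ≤ j₂) :
    MeasurableSet[excSigma X u j₁ j₂] (allLe X (Set.Icc a b) u) := by
  rw [allLe_eq]
  refine MeasurableSet.biInter (Set.to_countable _) (fun s hs => ?_)
  have : {ω | X s ω ≤ u} = {ω | u < X s ω}ᶜ := by ext ω; simp [not_lt]
  rw [this]
  exact (excSigma_exc (le_trans h1 hs.1) (le_trans hs.2 h2)).compl

end Meas



-- telescoping product identity
lemma prod_tel (lam : ℕ → ℝ) : ∀ (k a b : ℕ), b ≤ a + k →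
    ∑ s ∈ Finset.Icc (a+1) b, lam s * ∏ s' ∈ Finset.Icc (s+1) b, (1 + lam s') =
      ∏ s ∈ Finset.Icc (a+1) b, (1 + lam s) - 1 := by
  intro k
  induction k with
  | zero =>
    intro a b hab
    rw [Finset.Icc_eq_empty (by omega)]
    simp
  | succ k ih =>
    intro a b hab
    by_cases h : b ≤ a
    · rw [Finset.Icc_eq_empty (by omega)]; simp
    · have h1 : a + 1 ≤ b := by omega
      have hins : Finset.Icc (a+1) b = insert (a+1) (Finset.Icc (a+2) b) := by
        ext x; simp [Finset.mem_Icc, Finset.mem_insert]; omega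
      have hnot : (a+1) ∉ Finset.Icc (a+2) b := by simp
      rw [hins, Finset.sum_insert hnot, Finset.prod_insert hnot, ih (a+1) b (by omega)]
      have : Finset.Icc (a+1+1) b = Finset.Icc (a+2) b := by norm_num
      rw [this]
      ring

-- telescoping sum
lemma sum_tel (f : ℕ → ℝ) : ∀ (k a b : ℕ), a ≤ b → b ≤ a + k →
    ∑ s ∈ Finset.Icc (a+1) b, (f s - f (s-1)) = f b - f a := by
  intro k
  induction k with
  | zero =>
    intro a b h1 h2
    have : a = b := by omega
    subst this
    rw [Finset.Icc_eq_empty (by omega)]; simp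
  | succ k ih =>
    intro a b h1 h2
    by_cases h : a = b
    · subst h; rw [Finset.Icc_eq_empty (by omega)]; simp
    · have h3 : a + 1 ≤ b := by omega
      have hins : Finset.Icc (a+1) b = insert (a+1) (Finset.Icc (a+2) b) := by
        ext x; simp [Finset.mem_Icc, Finset.mem_insert]; omega
      have hnot : (a+1) ∉ Finset.Icc (a+2) b := by simp
      rw [hins, Finset.sum_insert hnot]
      have := ih (a+1) b h3 (by omega)
      have e2 : Finset.Icc (a+1+1) b = Finset.Icc (a+2) b := by norm_num
      rw [e2] at this
      rw [this]
      have : a + 1 - 1 = a := by omega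
      rw [this]; ring

-- Gronwall
lemma gronwall (g h lam : ℕ → ℝ) (b d : ℕ) (hd : 1 ≤ d) (D : ℝ) (hD : 0 ≤ D)
    (hlam : ∀ s, 0 ≤ lam s)
    (hbase : ∀ a, b ≤ a → g a = h a)
    (hrec : ∀ a, |g a - h a| ≤ D + ∑ s ∈ Finset.Icc (a+1) b, lam s * |g (s+d) - h (s+d)|) :
    ∀ (k a : ℕ), b ≤ a + k → |g a - h a| ≤ D * ∏ s ∈ Finset.Icc (a+1) b, (1 + lam s) := by
  intro k
  induction k with
  | zero =>
    intro a hab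
    rw [hbase a hab, sub_self, abs_zero, Finset.Icc_eq_empty (by omega)]
    simp [hD]
  | succ k ih =>
    intro a hab
    by_cases h' : b ≤ a
    · rw [hbase a h', sub_self, abs_zero]
      refine mul_nonneg hD (Finset.prod_nonneg (fun s _ => by have := hlam s; linarith))
    · refine (hrec a).trans ?_
      have key : ∀ s ∈ Finset.Icc (a+1) b,
          lam s * |g (s+d) - h (s+d)| ≤
            lam s * (D * ∏ s' ∈ Finset.Icc (s+1) b, (1 + lam s')) := by
        intro s hs
        rw [Finset.mem_Icc] at hs
        refine mul_le_mul_of_nonneg_left ?_ (hlam s)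
        have h1 : |g (s+d) - h (s+d)| ≤ D * ∏ s' ∈ Finset.Icc (s+d+1) b, (1 + lam s') :=
          ih (s+d) (by omega)
        refine h1.trans (mul_le_mul_of_nonneg_left ?_ hD)
        have hsub : Finset.Icc (s+d+1) b ⊆ Finset.Icc (s+1) b := by
          intro x hx; rw [Finset.mem_Icc] at *; omega
        have hps : (∏ s' ∈ (Finset.Icc (s+1) b) \ (Finset.Icc (s+d+1) b), (1 + lam s')) *
            (∏ s' ∈ Finset.Icc (s+d+1) b, (1 + lam s')) = ∏ s' ∈ Finset.Icc (s+1) b, (1 + lam s') :=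
          Finset.prod_sdiff hsub
        rw [← hps]
        have hA : (0:ℝ) ≤ ∏ s' ∈ Finset.Icc (s+d+1) b, (1 + lam s') :=
          Finset.prod_nonneg (fun x _ => by have := hlam x; linarith)
        have hB : (1:ℝ) ≤ ∏ s' ∈ (Finset.Icc (s+1) b) \ (Finset.Icc (s+d+1) b), (1 + lam s') :=
          by
            have : (1:ℝ) = ∏ s' ∈ (Finset.Icc (s+1) b) \ (Finset.Icc (s+d+1) b), (1:ℝ) := by simp
            rw [this]
            exact Finset.prod_le_prod (fun x _ => zero_le_one)
              (fun x _ => by have := hlam x; linarith)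
        nlinarith [hA, hB]
      calc D + ∑ s ∈ Finset.Icc (a+1) b, lam s * |g (s+d) - h (s+d)|
          ≤ D + ∑ s ∈ Finset.Icc (a+1) b,
              lam s * (D * ∏ s' ∈ Finset.Icc (s+1) b, (1 + lam s')) :=
            add_le_add le_rfl (Finset.sum_le_sum key)
        _ = D + D * ∑ s ∈ Finset.Icc (a+1) b,
              lam s * ∏ s' ∈ Finset.Icc (s+1) b, (1 + lam s') := by
            rw [Finset.mul_sum]; congr 1; apply Finset.sum_congr rfl; intros; ring
        _ = D + D * (∏ s ∈ Finset.Icc (a+1) b, (1 + lam s) - 1) := by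
            rw [prod_tel lam b a b (by omega)]
        _ = D * ∏ s ∈ Finset.Icc (a+1) b, (1 + lam s) := by ring


lemma exp_neg_lip {A B : ℝ} (hA : 0 ≤ A) (hB : 0 ≤ B) :
    |Real.exp (-A) - Real.exp (-B)| ≤ |A - B| := by
  have key : ∀ C D_ : ℝ, 0 ≤ C → C ≤ D_ → Real.exp (-C) - Real.exp (-D_) ≤ D_ - C := by
    intro C D hC hCD
    have h1 : Real.exp (-D) = Real.exp (-C) * Real.exp (-(D - C)) := by
      rw [← Real.exp_add]; ring_nf
    have h2 : -(D - C) + 1 ≤ Real.exp (-(D - C)) := Real.add_one_le_exp _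
    have h3 : Real.exp (-C) ≤ 1 := Real.exp_le_one_iff.mpr (by linarith)
    have h4 : 0 < Real.exp (-C) := Real.exp_pos _
    nlinarith
  rcases le_total A B with h | h
  · have h5 : Real.exp (-B) ≤ Real.exp (-A) := Real.exp_le_exp.mpr (by linarith)
    rw [abs_of_nonneg (by linarith), abs_of_nonpos (by linarith)]
    have := key A B hA h; linarith
  · have h5 : Real.exp (-A) ≤ Real.exp (-B) := Real.exp_le_exp.mpr (by linarith)
    rw [abs_of_nonpos (by linarith), abs_of_nonneg (by linarith)]
    have := key B A hB h; linarith

lemma hrec_exp (lam : ℕ → ℝ) (b d : ℕ) (Fb : ℝ)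
    (h0 : ∀ s, 0 ≤ lam s) (h1 : ∀ s, lam s ≤ Fb) (hFb1 : Fb ≤ 1) (a : ℕ) :
    |Real.exp (-(∑ s ∈ Finset.Icc (a+1) b, lam s)) -
      (1 - ∑ s ∈ Finset.Icc (a+1) b,
          lam s * Real.exp (-(∑ s' ∈ Finset.Icc (s+d+1) b, lam s')))| ≤
    (∑ s ∈ Finset.Icc (a+1) b, lam s) * ((1 + (d : ℝ)) * Fb) := by
  have hFb0 : 0 ≤ Fb := le_trans (h0 0) (h1 0)
  by_cases hab : b ≤ a
  · rw [Finset.Icc_eq_empty (by omega)]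
    simp
  · push_neg at hab
    set H : ℕ → ℝ := fun x => Real.exp (-(∑ s' ∈ Finset.Icc (x+1) b, lam s')) with hH
    have Hnonneg : ∀ x, 0 ≤ H x := fun x => (Real.exp_pos _).le
    have Hle1 : ∀ x, H x ≤ 1 := by
      intro x
      exact Real.exp_le_one_iff.mpr (neg_nonpos.mpr
        (Finset.sum_nonneg (fun s _ => h0 s)))
    have htel : ∑ s ∈ Finset.Icc (a+1) b, (H s - H (s-1)) = 1 - H a := by
      have := sum_tel H b a b (by omega) (by omega)
      rw [this]
      have : H b = 1 := by
        rw [hH]; simp [Finset.Icc_eq_empty (by omega : ¬ b + 1 ≤ b)]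
      rw [this]
    have hHsplit : ∀ s, a + 1 ≤ s → s ≤ b → H (s-1) = H s * Real.exp (-(lam s)) := by
      intro s hs1 hs2
      have e1 : s - 1 + 1 = s := by omega
      have e2 : Finset.Icc s b = insert s (Finset.Icc (s+1) b) := by
        ext x; simp [Finset.mem_Icc]; omega
      rw [hH]
      simp only [e1, e2]
      rw [Finset.sum_insert (by simp), ← Real.exp_add]
      ring_nf
    -- pointwise estimate
    have hterm : ∀ s ∈ Finset.Icc (a+1) b,
        |lam s * H (s+d) - (H s - H (s-1))| ≤ lam s * ((1 + (d:ℝ)) * Fb) := by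
      intro s hs
      rw [Finset.mem_Icc] at hs
      rw [hHsplit s hs.1 hs.2]
      have hHd : |H (s+d) - H s| ≤ (d : ℝ) * Fb := by
        have hsub : Finset.Icc (s+d+1) b ⊆ Finset.Icc (s+1) b := by
          intro x hx; rw [Finset.mem_Icc] at *; omega
        have hsd : (∑ s' ∈ (Finset.Icc (s+1) b) \ (Finset.Icc (s+d+1) b), lam s') +
            (∑ s' ∈ Finset.Icc (s+d+1) b, lam s') = ∑ s' ∈ Finset.Icc (s+1) b, lam s' :=
          Finset.sum_sdiff hsub
        have hdiffnn : 0 ≤ ∑ s' ∈ (Finset.Icc (s+1) b) \ (Finset.Icc (s+d+1) b), lam s' :=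
          Finset.sum_nonneg (fun x _ => h0 x)
        have hdiffle : ∑ s' ∈ (Finset.Icc (s+1) b) \ (Finset.Icc (s+d+1) b), lam s' ≤
            (d : ℝ) * Fb := by
          have hcard : ((Finset.Icc (s+1) b) \ (Finset.Icc (s+d+1) b)).card ≤ d := by
            have : (Finset.Icc (s+1) b) \ (Finset.Icc (s+d+1) b) ⊆ Finset.Icc (s+1) (s+d) := by
              intro x hx
              simp only [Finset.mem_sdiff, Finset.mem_Icc, not_and, not_le] at hx
              rw [Finset.mem_Icc]; omega
            calc ((Finset.Icc (s+1) b) \ (Finset.Icc (s+d+1) b)).card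
                ≤ (Finset.Icc (s+1) (s+d)).card := Finset.card_le_card this
              _ = d := by rw [Nat.card_Icc]; omega
          calc ∑ s' ∈ (Finset.Icc (s+1) b) \ (Finset.Icc (s+d+1) b), lam s'
              ≤ ∑ s' ∈ (Finset.Icc (s+1) b) \ (Finset.Icc (s+d+1) b), Fb :=
                Finset.sum_le_sum (fun x _ => h1 x)
            _ = (((Finset.Icc (s+1) b) \ (Finset.Icc (s+d+1) b)).card : ℝ) * Fb := by
                rw [Finset.sum_const, nsmul_eq_mul]
            _ ≤ (d : ℝ) * Fb := by
                apply mul_le_mul_of_nonneg_right _ hFb0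
                exact_mod_cast hcard
        have := exp_neg_lip (Finset.sum_nonneg (fun x (_ : x ∈ Finset.Icc (s+d+1) b) => h0 x))
          (Finset.sum_nonneg (fun x (_ : x ∈ Finset.Icc (s+1) b) => h0 x))
        rw [hH]
        refine this.trans ?_
        rw [abs_of_nonpos (by linarith)]
        linarith
      have hquad : |Real.exp (-(lam s)) - 1 - (-(lam s))| ≤ (lam s)^2 := by
        have habs : |(-(lam s))| ≤ 1 := by
          rw [abs_neg, abs_of_nonneg (h0 s)]; linarith [h1 s]
        have := Real.abs_exp_sub_one_sub_id_le habs
        simpa [sq] using this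
      -- lam s * H (s+d) - (H s - H s * exp(-(lam s)))
      --  = lam s * (H (s+d) - H s) + H s * (lam s - (1 - exp (-(lam s))))
      have heq : lam s * H (s+d) - (H s - H s * Real.exp (-(lam s))) =
          lam s * (H (s+d) - H s) + H s * (Real.exp (-(lam s)) - 1 - (-(lam s))) := by ring
      rw [heq]
      calc |lam s * (H (s+d) - H s) + H s * (Real.exp (-(lam s)) - 1 - (-(lam s)))|
          ≤ |lam s * (H (s+d) - H s)| + |H s * (Real.exp (-(lam s)) - 1 - (-(lam s)))| :=
            abs_add_le _ _
        _ ≤ lam s * ((d:ℝ) * Fb) + 1 * (lam s)^2 := by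
            gcongr
            · rw [abs_mul, abs_of_nonneg (h0 s)]
              exact mul_le_mul_of_nonneg_left hHd (h0 s)
            · rw [abs_mul]
              apply mul_le_mul
              · rw [abs_of_nonneg (Hnonneg s)]; exact Hle1 s
              · exact hquad
              · exact abs_nonneg _
              · exact zero_le_one
        _ ≤ lam s * ((1 + (d:ℝ)) * Fb) := by
            have h2 : (lam s)^2 ≤ lam s * Fb := by
              have := h0 s; have := h1 s; nlinarith
            nlinarith [h0 s, hFb0, Nat.cast_nonneg (α := ℝ) d]
    -- assemble
    have hre : Real.exp (-(∑ s ∈ Finset.Icc (a+1) b, lam s)) -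
        (1 - ∑ s ∈ Finset.Icc (a+1) b,
          lam s * Real.exp (-(∑ s' ∈ Finset.Icc (s+d+1) b, lam s'))) =
        ∑ s ∈ Finset.Icc (a+1) b, (lam s * H (s+d) - (H s - H (s-1))) := by
      rw [Finset.sum_sub_distrib, htel]
      rw [hH]
      ring
    rw [hre]
    calc |∑ s ∈ Finset.Icc (a+1) b, (lam s * H (s+d) - (H s - H (s-1)))|
        ≤ ∑ s ∈ Finset.Icc (a+1) b, |lam s * H (s+d) - (H s - H (s-1))| :=
          Finset.abs_sum_le_sum_abs _ _
      _ ≤ ∑ s ∈ Finset.Icc (a+1) b, lam s * ((1 + (d:ℝ)) * Fb) :=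
          Finset.sum_le_sum hterm
      _ = (∑ s ∈ Finset.Icc (a+1) b, lam s) * ((1 + (d:ℝ)) * Fb) := by
          rw [Finset.sum_mul]

section Core
variable {Ω : Type*} [MeasurableSpace Ω] (P : Measure Ω) [IsProbabilityMeasure P]
  {X : ℕ → Ω → ℝ}

lemma allLe_empty_iff {a b : ℕ} (h : b < a) (u : ℝ) : allLe X (Set.Icc a b) u = Set.univ := by
  rw [Set.Icc_eq_empty (by omega)]
  ext ω; simp [allLe]

lemma lastExc (hmeas : ∀ i, Measurable (X i)) (u : ℝ) :
    ∀ (k a b : ℕ), b ≤ a + k →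
    pr P (allLe X (Set.Icc (a+1) b) u) =
      1 - ∑ s ∈ Finset.Icc (a+1) b, pr P ({ω | u < X s ω} ∩ allLe X (Set.Icc (s+1) b) u) := by
  intro k
  induction k with
  | zero =>
    intro a b hab
    rw [allLe_empty_iff (by omega), Finset.Icc_eq_empty (by omega), pr_univ P]
    simp
  | succ k ih =>
    intro a b hab
    by_cases h : b ≤ a
    · rw [allLe_empty_iff (by omega), Finset.Icc_eq_empty (by omega), pr_univ P]; simp
    · have h1 : a + 1 ≤ b := by omega
      have hsplit := pr_split P (allLe X (Set.Icc (a+2) b) u)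
        (measurableSet_le (hmeas (a+1)) measurable_const :
          MeasurableSet {ω | X (a+1) ω ≤ u})
      have e1 : allLe X (Set.Icc (a+2) b) u ∩ {ω | X (a+1) ω ≤ u} =
          allLe X (Set.Icc (a+1) b) u := by
        ext ω
        simp only [allLe, Set.mem_inter_iff, Set.mem_setOf_eq, Set.mem_Icc]
        constructor
        · rintro ⟨hall, hle⟩ i ⟨hi1, hi2⟩
          rcases Nat.eq_or_lt_of_le hi1 with rfl | hlt
          · exact hle
          · exact hall i ⟨by omega, hi2⟩
        · intro hall
          exact ⟨fun i ⟨hi1, hi2⟩ => hall i ⟨by omega, hi2⟩, hall (a+1) ⟨le_refl _, h1⟩⟩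
      have e2 : allLe X (Set.Icc (a+2) b) u \ {ω | X (a+1) ω ≤ u} =
          {ω | u < X (a+1) ω} ∩ allLe X (Set.Icc (a+2) b) u := by
        ext ω
        simp only [allLe, Set.mem_diff, Set.mem_inter_iff, Set.mem_setOf_eq, not_le]
        tauto
      rw [e1, e2] at hsplit
      have hih := ih (a+1) b (by omega)
      have e3 : Finset.Icc (a+1+1) b = Finset.Icc (a+2) b := by norm_num
      have e4 : Set.Icc (a+1+1) b = Set.Icc (a+2) b := by norm_num
      rw [e3, e4] at hih
      have hins : Finset.Icc (a+1) b = insert (a+1) (Finset.Icc (a+2) b) := by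
        ext x; simp [Finset.mem_Icc]; omega
      rw [hins, Finset.sum_insert (by simp)]
      have e5 : Set.Icc (a+1+1) b = Set.Icc (a+2) b := by norm_num
      rw [e5]
      rw [hih] at hsplit
      linarith

lemma pr_allLe_compl_le (hmeas : ∀ i, Measurable (X i)) (u Fb : ℝ) (a b : ℕ)
    (hFb : ∀ s, 1 ≤ s → pr P {ω | u < X s ω} = Fb) (ha : 1 ≤ a) :
    pr P (allLe X (Set.Icc a b) u)ᶜ ≤ ((Finset.Icc a b).card : ℝ) * Fb := by
  have hsub : (allLe X (Set.Icc a b) u)ᶜ ⊆ ⋃ j ∈ Finset.Icc a b, {ω | u < X j ω} := by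
    intro ω hω
    simp only [allLe, Set.mem_compl_iff, Set.mem_setOf_eq, not_forall] at hω
    obtain ⟨j, hj, hjle⟩ := hω
    rw [Set.mem_Icc] at hj
    refine Set.mem_biUnion (Finset.mem_Icc.mpr hj) ?_
    simp only [Set.mem_setOf_eq]
    exact lt_of_not_ge hjle
  refine (pr_mono P hsub).trans ?_
  refine (pr_biUnion_le P _ _).trans ?_
  rw [← nsmul_eq_mul, ← Finset.sum_const]
  apply Finset.sum_le_sum
  intro j hj
  rw [Finset.mem_Icc] at hj
  rw [hFb j (le_trans ha hj.1)]


lemma keyTerm (hmeas : ∀ i, Measurable (X i)) (u Fb ε : ℝ) (pp qq b C : ℕ)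
    (thi : ℕ → ℝ)
    (hFb : ∀ s, 1 ≤ s → pr P {ω | u < X s ω} = Fb)
    (hFbpos : 0 < Fb)
    (hmixE : ∀ l, 1 ≤ l → l + qq ≤ C → ∀ E₁ E₂ : Set Ω,
      MeasurableSet[excSigma X u 1 l] E₁ → MeasurableSet[excSigma X u (l + qq) C] E₂ →
      |pr P (E₁ ∩ E₂) - pr P E₁ * pr P E₂| ≤ ε * pr P E₁)
    (hthi : ∀ s, 1 ≤ s → Fb * thi s = pr P ({ω | u < X s ω} ∩ allLe X (Set.Icc (s+1) (s+pp)) u))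
    (hthi0 : ∀ s, 0 ≤ thi s) (hthi1 : ∀ s, thi s ≤ 1)
    (hqp : qq ≤ pp) (hbC : b + pp + qq ≤ C) (hε : 0 ≤ ε)
    (s : ℕ) (hs : 1 ≤ s) (hsb : s ≤ b) :
    |pr P ({ω | u < X s ω} ∩ allLe X (Set.Icc (s+1) b) u)
      - Fb * thi s * pr P (allLe X (Set.Icc (s+pp+qq+1) b) u)| ≤
    (if s + pp ≤ b then Fb * ((qq : ℝ) * Fb + 2*ε) else Fb) := by
  have mExc : ∀ j, MeasurableSet {ω | u < X j ω} := fun j => measurable_exc hmeas j u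
  have mAll : ∀ (S : Set ℕ), MeasurableSet (allLe X S u) := fun S => measurable_allLe hmeas S u
  by_cases hcase : s + pp ≤ b
  · rw [if_pos hcase]
    -- refined estimate
    set T₁ := {ω | u < X s ω} ∩ allLe X (Set.Icc (s+1) b) u with hT₁
    set Es := {ω | u < X s ω} ∩ allLe X (Set.Icc (s+1) (s+pp)) u with hEs
    set E₂ := allLe X (Set.Icc (s+pp+qq+1) b) u with hE₂
    set T₂ := Es ∩ E₂ with hT₂
    set E₁' := {ω | u < X s ω} ∩ allLe X (Set.Icc (s+1) (s+pp-qq)) u with hE₁'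
    set E₂' := (allLe X (Set.Icc (s+pp+1) (s+pp+qq)) u)ᶜ with hE₂'
    have hsub : T₁ ⊆ T₂ := by
      rintro ω ⟨hexc, hall⟩
      refine ⟨⟨hexc, fun j hj => hall j ?_⟩, fun j hj => hall j ?_⟩ <;>
        (rw [Set.mem_Icc] at *; omega)
    have hdiffsub : T₂ \ T₁ ⊆ E₁' ∩ E₂' := by
      rintro ω ⟨⟨⟨hexc, hall1⟩, hall2⟩, hnot⟩
      have hbad : ∃ j ∈ Set.Icc (s+1) b, ¬ X j ω ≤ u := by
        by_contra hcon
        push_neg at hcon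
        exact hnot ⟨hexc, fun j hj => hcon j hj⟩
      obtain ⟨j, hj, hjgt⟩ := hbad
      rw [Set.mem_Icc] at hj
      have hj1 : ¬ (s+1 ≤ j ∧ j ≤ s+pp) := by
        intro hcc
        exact hjgt (hall1 j (Set.mem_Icc.mpr hcc))
      have hj2 : ¬ (s+pp+qq+1 ≤ j ∧ j ≤ b) := by
        intro hcc
        exact hjgt (hall2 j (Set.mem_Icc.mpr hcc))
      constructor
      · exact ⟨hexc, fun x hx => hall1 x (by rw [Set.mem_Icc] at *; omega)⟩
      · intro hcon
        exact hjgt (hcon j (Set.mem_Icc.mpr (by omega)))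
    -- split pr T₂
    have hsplit : pr P T₂ = pr P T₁ + pr P (T₂ \ T₁) := by
      have := pr_split P T₂ ((mExc s).inter (mAll _) : MeasurableSet T₁)
      rw [Set.inter_eq_right.mpr hsub] at this
      exact this
    -- mix for E₁' E₂'
    have hmix1 : pr P (E₁' ∩ E₂') ≤ Fb * ((qq:ℝ) * Fb) + ε * Fb := by
      have l := s + pp - qq
      have hm := hmixE (s + pp - qq) (by omega) (by omega) E₁' E₂' ?m1 ?m2
      case m1 =>
        refine MeasurableSet.inter ?_ ?_
        · exact excSigma_exc (by omega) (by omega)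
        · exact excSigma_allLe (by omega) (by omega)
      case m2 =>
        refine MeasurableSet.compl ?_
        exact excSigma_allLe (by omega) (by omega)
      have hE1le : pr P E₁' ≤ Fb := by
        rw [← hFb s hs]
        exact pr_mono P Set.inter_subset_left
      have hE2le : pr P E₂' ≤ (qq:ℝ) * Fb := by
        have := pr_allLe_compl_le P hmeas u Fb (s+pp+1) (s+pp+qq) hFb (by omega)
        rw [Nat.card_Icc] at this
        have hc : ((s+pp+qq+1 - (s+pp+1) : ℕ) : ℝ) = (qq : ℝ) := by
          congr 1; omega
        rw [hc] at this
        exact this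
      have h0 : 0 ≤ pr P E₁' := pr_nonneg P _
      have h0' : 0 ≤ pr P E₂' := pr_nonneg P _
      have := abs_le.mp hm
      nlinarith
    -- mix for Es E₂
    have hmix2 : |pr P T₂ - pr P Es * pr P E₂| ≤ ε * Fb := by
      have hm := hmixE (s + pp) (by omega) (by omega) Es E₂ ?m3 ?m4
      case m3 =>
        refine MeasurableSet.inter ?_ ?_
        · exact excSigma_exc (by omega) (by omega)
        · exact excSigma_allLe (by omega) (by omega)
      case m4 => exact excSigma_allLe (by omega) (by omega)
      refine hm.trans ?_
      have : pr P Es ≤ Fb := by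
        rw [← hFb s hs]; exact pr_mono P Set.inter_subset_left
      nlinarith [pr_nonneg P Es]
    have hgle : pr P (T₂ \ T₁) ≤ pr P (E₁' ∩ E₂') := pr_mono P hdiffsub
    have hEsval : pr P Es = Fb * thi s := (hthi s hs).symm
    have hd0 : 0 ≤ pr P (T₂ \ T₁) := pr_nonneg P _
    have habs := abs_le.mp hmix2
    have hx : pr P Es * pr P E₂ = Fb * thi s * pr P E₂ := by rw [hEsval]
    rw [abs_le]
    constructor <;> nlinarith [habs.1, habs.2, hx, hsplit, hgle, hmix1, hd0]
  · rw [if_neg hcase]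
    have h1 : pr P ({ω | u < X s ω} ∩ allLe X (Set.Icc (s+1) b) u) ≤ Fb := by
      rw [← hFb s hs]; exact pr_mono P Set.inter_subset_left
    have h2 : 0 ≤ pr P ({ω | u < X s ω} ∩ allLe X (Set.Icc (s+1) b) u) := pr_nonneg P _
    have h3 : 0 ≤ Fb * thi s * pr P (allLe X (Set.Icc (s+pp+qq+1) b) u) := by
      have := hthi0 s
      have := pr_nonneg P (allLe X (Set.Icc (s+pp+qq+1) b) u)
      positivity
    have h4 : Fb * thi s * pr P (allLe X (Set.Icc (s+pp+qq+1) b) u) ≤ Fb := by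
      calc Fb * thi s * pr P (allLe X (Set.Icc (s+pp+qq+1) b) u)
          ≤ Fb * 1 * 1 := by
            apply mul_le_mul
            · exact mul_le_mul_of_nonneg_left (hthi1 s) hFbpos.le
            · exact pr_le_one P _
            · exact pr_nonneg P _
            · nlinarith
        _ = Fb := by ring
    rw [abs_le]
    constructor <;> nlinarith


lemma recursion (hmeas : ∀ i, Measurable (X i)) (u Fb ε : ℝ) (pp qq b C : ℕ)
    (th thi : ℕ → ℝ)
    (hFb : ∀ s, 1 ≤ s → pr P {ω | u < X s ω} = Fb)
    (hFbpos : 0 < Fb)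
    (hmixE : ∀ l, 1 ≤ l → l + qq ≤ C → ∀ E₁ E₂ : Set Ω,
      MeasurableSet[excSigma X u 1 l] E₁ → MeasurableSet[excSigma X u (l + qq) C] E₂ →
      |pr P (E₁ ∩ E₂) - pr P E₁ * pr P E₂| ≤ ε * pr P E₁)
    (hthi : ∀ s, 1 ≤ s → Fb * thi s = pr P ({ω | u < X s ω} ∩ allLe X (Set.Icc (s+1) (s+pp)) u))
    (hthi0 : ∀ s, 0 ≤ thi s) (hthi1 : ∀ s, thi s ≤ 1)
    (hthth : ∀ s, 1 ≤ s → s ≤ b → |th s - thi s| ≤ ε)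
    (hqp : qq ≤ pp) (hbC : b + pp + qq ≤ C) (hε : 0 ≤ ε) (a : ℕ) :
    |pr P (allLe X (Set.Icc (a+1) b) u) -
      (1 - ∑ s ∈ Finset.Icc (a+1) b,
        Fb * th s * pr P (allLe X (Set.Icc (s+pp+qq+1) b) u))| ≤
    (b:ℝ) * Fb * ((qq:ℝ) * Fb + 3*ε) + (pp:ℝ) * Fb := by
  have hid := lastExc P hmeas u b a b (by omega)
  have hWterm : ∀ s ∈ Finset.Icc (a+1) b,
      |pr P ({ω | u < X s ω} ∩ allLe X (Set.Icc (s+1) b) u) -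
        Fb * th s * pr P (allLe X (Set.Icc (s+pp+qq+1) b) u)| ≤
      (Fb * ((qq:ℝ) * Fb + 2*ε) + Fb * ε) + (if s + pp ≤ b then 0 else Fb) := by
    intro s hsm
    rw [Finset.mem_Icc] at hsm
    have hkey := keyTerm P hmeas u Fb ε pp qq b C thi hFb hFbpos hmixE hthi hthi0 hthi1
      hqp hbC hε s (by omega) hsm.2
    have hswap : |Fb * thi s * pr P (allLe X (Set.Icc (s+pp+qq+1) b) u) -
        Fb * th s * pr P (allLe X (Set.Icc (s+pp+qq+1) b) u)| ≤ Fb * ε := by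
      have h1 : |thi s - th s| ≤ ε := by
        rw [abs_sub_comm]; exact hthth s (by omega) hsm.2
      have h2 : 0 ≤ pr P (allLe X (Set.Icc (s+pp+qq+1) b) u) := pr_nonneg P _
      have h3 : pr P (allLe X (Set.Icc (s+pp+qq+1) b) u) ≤ 1 := pr_le_one P _
      have : Fb * thi s * pr P (allLe X (Set.Icc (s+pp+qq+1) b) u) -
          Fb * th s * pr P (allLe X (Set.Icc (s+pp+qq+1) b) u) =
          Fb * pr P (allLe X (Set.Icc (s+pp+qq+1) b) u) * (thi s - th s) := by ring
      rw [this, abs_mul, abs_of_nonneg (by positivity)]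
      calc Fb * pr P (allLe X (Set.Icc (s+pp+qq+1) b) u) * |thi s - th s|
          ≤ Fb * 1 * ε := by
            apply mul_le_mul
            · exact mul_le_mul_of_nonneg_left h3 hFbpos.le
            · exact h1
            · exact abs_nonneg _
            · nlinarith
        _ = Fb * ε := by ring
    have htri := (abs_sub_le _ (Fb * thi s * pr P (allLe X (Set.Icc (s+pp+qq+1) b) u)) _).trans
      (add_le_add hkey hswap)
    refine htri.trans ?_
    by_cases hc : s + pp ≤ b
    · rw [if_pos hc, if_pos hc]; linarith
    · rw [if_neg hc, if_neg hc]
      have : 0 ≤ Fb * ((qq:ℝ) * Fb + 2*ε) := by positivity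
      linarith
  have habs : |pr P (allLe X (Set.Icc (a+1) b) u) -
      (1 - ∑ s ∈ Finset.Icc (a+1) b,
        Fb * th s * pr P (allLe X (Set.Icc (s+pp+qq+1) b) u))| ≤
      ∑ s ∈ Finset.Icc (a+1) b,
        ((Fb * ((qq:ℝ) * Fb + 2*ε) + Fb * ε) + (if s + pp ≤ b then 0 else Fb)) := by
    rw [hid]
    have : (1 - ∑ s ∈ Finset.Icc (a+1) b,
          pr P ({ω | u < X s ω} ∩ allLe X (Set.Icc (s+1) b) u)) -
        (1 - ∑ s ∈ Finset.Icc (a+1) b,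
          Fb * th s * pr P (allLe X (Set.Icc (s+pp+qq+1) b) u)) =
        ∑ s ∈ Finset.Icc (a+1) b,
          (Fb * th s * pr P (allLe X (Set.Icc (s+pp+qq+1) b) u) -
            pr P ({ω | u < X s ω} ∩ allLe X (Set.Icc (s+1) b) u)) := by
      rw [Finset.sum_sub_distrib]; ring
    rw [this]
    refine (Finset.abs_sum_le_sum_abs _ _).trans ?_
    apply Finset.sum_le_sum
    intro s hs
    rw [abs_sub_comm]
    exact hWterm s hs
  refine habs.trans ?_
  rw [Finset.sum_add_distrib, Finset.sum_const, nsmul_eq_mul]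
  have hcard : ((Finset.Icc (a+1) b).card : ℝ) ≤ (b : ℝ) := by
    rw [Nat.card_Icc]
    exact_mod_cast Nat.le_of_lt_succ (by omega : b + 1 - (a+1) < b + 1)
  have hifsum : ∑ s ∈ Finset.Icc (a+1) b, (if s + pp ≤ b then (0:ℝ) else Fb) ≤ (pp:ℝ) * Fb := by
    have e1 : ∀ s, (if s + pp ≤ b then (0:ℝ) else Fb) = (if ¬ (s + pp ≤ b) then Fb else 0) := by
      intro s; by_cases hc : s + pp ≤ b <;> simp [hc]
    simp_rw [e1]
    rw [Finset.sum_ite, Finset.sum_const, Finset.sum_const]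
    simp only [nsmul_eq_mul, mul_zero, add_zero]
    have hsubf : (Finset.Icc (a+1) b).filter (fun s => ¬ (s + pp ≤ b)) ⊆
        Finset.Icc (b+1-pp) b := by
      intro x hx
      simp only [Finset.mem_filter, Finset.mem_Icc, not_le] at hx
      rw [Finset.mem_Icc]; omega
    have hcard2 : (((Finset.Icc (a+1) b).filter (fun s => ¬ (s + pp ≤ b))).card : ℝ) ≤ (pp:ℝ) := by
      have := Finset.card_le_card hsubf
      rw [Nat.card_Icc] at this
      exact_mod_cast this.trans (by omega)
    exact mul_le_mul_of_nonneg_right hcard2 hFbpos.le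
  have h0 : (0:ℝ) ≤ Fb * ((qq:ℝ) * Fb + 2*ε) + Fb * ε := by positivity
  calc ((Finset.Icc (a+1) b).card : ℝ) * (Fb * ((qq:ℝ) * Fb + 2*ε) + Fb * ε) +
        ∑ s ∈ Finset.Icc (a+1) b, (if s + pp ≤ b then (0:ℝ) else Fb)
      ≤ (b:ℝ) * (Fb * ((qq:ℝ) * Fb + 2*ε) + Fb * ε) + (pp:ℝ) * Fb :=
        add_le_add (mul_le_mul_of_nonneg_right hcard h0) hifsum
    _ = (b:ℝ) * Fb * ((qq:ℝ) * Fb + 3*ε) + (pp:ℝ) * Fb := by ring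

end Core

lemma tendsto_zero_of_abs_le (f : ℕ → ℝ)
    (h : ∀ ε : ℝ, 0 < ε → ∀ᶠ n in Filter.atTop, |f n| ≤ ε) :
    Filter.Tendsto f Filter.atTop (nhds 0) := by
  rw [NormedAddCommGroup.tendsto_nhds_zero]
  intro ε hε
  filter_upwards [h (ε/2) (by linarith)] with n hn
  rw [Real.norm_eq_abs]
  linarith

/-- Theorem IntExcThm: with `n·F̄(xₙ) → τ > 0`, a separation sequence
`qₙ = o(n)` with `α*_{⌈cn⌉,qₙ}(xₙ) → 0` for every `c > 0` (stated in ε-form), AIM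
coefficients `α` with `n·αₙ = o(pₙ)`, `pₙ = o(n)`, `qₙ = o(pₙ)`,
`θ_{i,n} = P(M_{i,i+pₙ} ≤ xₙ | X_i > xₙ) → θ_i`, `max_{1≤i≤⌈cn⌉}|θ_i − θ_{i,n}| → 0`
for every `c > 0`, and Cesàro means of `(θ_i)` converging to `γ`: for each fixed
`i ≥ 1` and `t > 0`, `P(F̄(xₙ)·T_i(xₙ) > t | X_i > xₙ) → θ_i·e^{−γt}`. -/
theorem stmt9 {Ω : Type*} [MeasurableSpace Ω] (P : Measure Ω) [IsProbabilityMeasure P]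
    (X : ℕ → Ω → ℝ) (F : ℝ → ℝ) (xs : ℕ → ℝ) (q : ℕ → ℕ) (α : ℕ → ℝ) (p : ℕ → ℕ)
    (τ : ℝ) (hτ : 0 < τ)
    (hmeas : ∀ i, Measurable (X i))
    (hF : ∀ i, 1 ≤ i → ∀ t : ℝ, pr P {ω | X i ω ≤ t} = F t)
    (hFbarpos : ∀ n, 0 < 1 - F (xs n))
    (hFbar : Tendsto (fun n : ℕ => (n : ℝ) * (1 - F (xs n))) atTop (nhds τ))
    (hqpos : ∀ m, 1 ≤ q m)
    (hq : (fun n : ℕ => (q n : ℝ)) =o[atTop] (fun n : ℕ => (n : ℝ)))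
    (hmix : ∀ c : ℝ, 0 < c → ∀ ε : ℝ, 0 < ε → ∀ᶠ n : ℕ in atTop,
      ∀ l : ℕ, 1 ≤ l → l + q n ≤ ⌈c * n⌉₊ →
        ∀ E₁ E₂ : Set Ω, MeasurableSet[excSigma X (xs n) 1 l] E₁ →
          MeasurableSet[excSigma X (xs n) (l + q n) ⌈c * n⌉₊] E₂ →
          0 < pr P E₁ → |pr P (E₁ ∩ E₂) / pr P E₁ - pr P E₂| < ε)
    (hα : Tendsto α atTop (nhds 0))
    (hbd : AIMBound P X xs q α)
    (hppos : ∀ m, 1 ≤ p m)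
    (hp : (fun n : ℕ => (p n : ℝ)) =o[atTop] (fun n : ℕ => (n : ℝ)))
    (hnα : (fun n : ℕ => (n : ℝ) * α n) =o[atTop] (fun n : ℕ => (p n : ℝ)))
    (hqp : (fun n : ℕ => (q n : ℝ)) =o[atTop] (fun n : ℕ => (p n : ℝ)))
    (θin : ℕ → ℕ → ℝ)
    (hθin : ∀ i n : ℕ, θin i n =
      pr P ({ω | xs n < X i ω} ∩ allLe X (Set.Icc (i + 1) (i + p n)) (xs n)) /
        pr P {ω | xs n < X i ω})
    (θ : ℕ → ℝ)
    (hθlim : ∀ i : ℕ, 1 ≤ i → Tendsto (fun n => θin i n) atTop (nhds (θ i)))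
    (hunif : ∀ c : ℝ, 0 < c → ∀ ε : ℝ, 0 < ε → ∀ᶠ n : ℕ in atTop,
      ∀ i : ℕ, 1 ≤ i → i ≤ ⌈c * n⌉₊ → |θ i - θin i n| < ε)
    (γ : ℝ)
    (hcesaro : Tendsto (fun n : ℕ => (n : ℝ)⁻¹ * ∑ i ∈ Finset.Icc 1 n, θ i)
      atTop (nhds γ)) :
    ∀ i : ℕ, 1 ≤ i → ∀ t : ℝ, 0 < t →
      Tendsto (fun n : ℕ =>
        pr P ({ω | xs n < X i ω} ∩
            {ω | ∀ m : ℕ, 1 ≤ m → (1 - F (xs n)) * m ≤ t → X (m + i) ω ≤ xs n}) /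
          pr P {ω | xs n < X i ω})
        atTop (nhds (θ i * Real.exp (-(γ * t)))) := by
  intro i hi t ht
  classical
  -- notation
  set Fb : ℕ → ℝ := fun n => 1 - F (xs n) with hFbdef
  set rr : ℕ → ℕ := fun n => ⌊t / Fb n⌋₊ with hrrdef
  set bb : ℕ → ℕ := fun n => i + rr n with hbbdef
  set ww : ℕ → ℕ := fun n => i + p n + q n with hwwdef
  set Θ : ℕ → ℝ := fun s => if s = 0 then 0 else θ s with hΘdef
  have hFbpos : ∀ n, 0 < Fb n := hFbarpos
  have hFble1 : ∀ n, Fb n ≤ 1 := by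
    intro n
    have h0 : 0 ≤ pr P {ω | X i ω ≤ xs n} := pr_nonneg P _
    rw [hF i hi (xs n)] at h0
    simp only [hFbdef]; linarith
  have pr_exc : ∀ n s, 1 ≤ s → pr P {ω | xs n < X s ω} = Fb n := by
    intro n s hs
    have hc : {ω | xs n < X s ω} = {ω | X s ω ≤ xs n}ᶜ := by
      ext ω; simp [not_le]
    rw [hc, pr_compl P (measurableSet_le (hmeas s) measurable_const), hF s hs (xs n)]
  -- θin basic facts
  have hthiv : ∀ n s, 1 ≤ s → Fb n * θin s n =
      pr P ({ω | xs n < X s ω} ∩ allLe X (Set.Icc (s+1) (s + p n)) (xs n)) := by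
    intro n s hs
    rw [hθin s n, pr_exc n s hs]
    rw [mul_div_assoc']
    exact mul_div_cancel_left₀ _ (hFbpos n).ne'
  have hthi0 : ∀ n s, 0 ≤ θin s n := by
    intro n s
    rw [hθin s n]
    exact div_nonneg (pr_nonneg P _) (pr_nonneg P _)
  have hthi1 : ∀ n s, θin s n ≤ 1 := by
    intro n s
    rw [hθin s n]
    rcases eq_or_lt_of_le (pr_nonneg P {ω | xs n < X s ω}) with h | h
    · rw [← h]; simp
    · rw [div_le_one h]
      exact pr_mono P Set.inter_subset_left
  have hth01 : ∀ s, 1 ≤ s → 0 ≤ θ s ∧ θ s ≤ 1 := by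
    intro s hs
    constructor
    · exact ge_of_tendsto (hθlim s hs) (Filter.Eventually.of_forall (fun n => hthi0 n s))
    · exact le_of_tendsto (hθlim s hs) (Filter.Eventually.of_forall (fun n => hthi1 n s))
  have hΘ0 : ∀ s, 0 ≤ Θ s := by
    intro s
    rw [hΘdef]
    by_cases h : s = 0
    · simp [h]
    · simp only [h, if_false]
      exact (hth01 s (by omega)).1
  have hΘ1 : ∀ s, Θ s ≤ 1 := by
    intro s
    rw [hΘdef]
    by_cases h : s = 0
    · simp [h]
    · simp only [h, if_false]
      exact (hth01 s (by omega)).2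

  -- limit facts
  have hFb0 : Tendsto Fb atTop (nhds 0) := by
    have h1 : Tendsto (fun n : ℕ => ((n : ℝ))⁻¹) atTop (nhds 0) :=
      tendsto_inv_atTop_zero.comp tendsto_natCast_atTop_atTop
    have h2 := hFbar.mul h1
    rw [mul_zero] at h2
    refine h2.congr' ?_
    filter_upwards [eventually_ge_atTop 1] with n hn
    have hne : (n:ℝ) ≠ 0 := Nat.cast_ne_zero.mpr (by omega)
    show (n:ℝ) * Fb n * ((n:ℝ))⁻¹ = Fb n
    field_simp
  have hlittle : ∀ (f : ℕ → ℕ), (fun n : ℕ => (f n : ℝ)) =o[atTop] (fun n : ℕ => (n : ℝ)) →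
      Tendsto (fun n => (f n : ℝ) * Fb n) atTop (nhds 0) := by
    intro f hf
    have h1 : Tendsto (fun n : ℕ => (f n : ℝ)/(n:ℝ)) atTop (nhds 0) := hf.tendsto_div_nhds_zero
    have h2 := h1.mul hFbar
    rw [zero_mul] at h2
    refine h2.congr' ?_
    filter_upwards [eventually_ge_atTop 1] with n hn
    have hne : (n:ℝ) ≠ 0 := Nat.cast_ne_zero.mpr (by omega)
    show (f n : ℝ)/(n:ℝ) * ((n:ℝ) * Fb n) = (f n : ℝ) * Fb n
    field_simp
  have hqFb := hlittle q hq
  have hpFb := hlittle p hp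
  have hiFb : Tendsto (fun n => (i:ℝ) * Fb n) atTop (nhds 0) := by
    simpa using hFb0.const_mul (i:ℝ)
  have hwwFb : Tendsto (fun n => (ww n : ℝ) * Fb n) atTop (nhds 0) := by
    have h2 : Tendsto (fun n => (i:ℝ)*Fb n + (p n:ℝ)*Fb n + (q n:ℝ)*Fb n) atTop (nhds 0) := by
      simpa using (hiFb.add hpFb).add hqFb
    refine h2.congr (fun n => ?_)
    rw [hwwdef]
    push_cast
    ring
  have hrrFble : ∀ n, (rr n : ℝ) * Fb n ≤ t := by
    intro n
    have h1 : (rr n : ℝ) ≤ t / Fb n := Nat.floor_le (div_nonneg ht.le (hFbpos n).le)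
    calc (rr n:ℝ) * Fb n ≤ (t / Fb n) * Fb n :=
          mul_le_mul_of_nonneg_right h1 (hFbpos n).le
      _ = t := div_mul_cancel₀ t (hFbpos n).ne'
  have hrrFbgt : ∀ n, t - Fb n < (rr n : ℝ) * Fb n := by
    intro n
    have h1 : t / Fb n - 1 < (rr n : ℝ) := Nat.sub_one_lt_floor _
    have h2 := mul_lt_mul_of_pos_right h1 (hFbpos n)
    calc t - Fb n = (t / Fb n - 1) * Fb n := by
          rw [sub_mul, div_mul_cancel₀ _ (hFbpos n).ne', one_mul]
      _ < _ := h2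
  have hrrFb : Tendsto (fun n => (rr n : ℝ) * Fb n) atTop (nhds t) := by
    apply tendsto_of_tendsto_of_tendsto_of_le_of_le'
      (g := fun n => t - Fb n) (h := fun _ => t)
    · simpa using (tendsto_const_nhds (x := t) (f := atTop)).sub hFb0
    · exact tendsto_const_nhds
    · exact Filter.Eventually.of_forall (fun n => (hrrFbgt n).le)
    · exact Filter.Eventually.of_forall hrrFble
  have hbbFb : Tendsto (fun n => (bb n : ℝ) * Fb n) atTop (nhds t) := by
    have h2 := hiFb.add hrrFb
    rw [zero_add] at h2
    refine h2.congr (fun n => ?_)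
    rw [hbbdef]
    push_cast
    ring
  have hbbTop : Tendsto bb atTop atTop := by
    have h2 : Tendsto Fb atTop (nhdsWithin 0 (Set.Ioi 0)) := by
      apply tendsto_nhdsWithin_of_tendsto_nhds_of_eventually_within _ hFb0
      exact Filter.Eventually.of_forall (fun n => hFbpos n)
    have h3 := h2.inv_tendsto_nhdsGT_zero
    have h4 := h3.const_mul_atTop ht
    have h1 : Tendsto (fun n => t / Fb n) atTop atTop := by
      refine h4.congr (fun n => ?_)
      rw [div_eq_mul_inv]
      rfl
    have h5 : Tendsto rr atTop atTop := tendsto_nat_floor_atTop.comp h1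
    exact tendsto_atTop_mono (fun n => (Nat.le_add_left (rr n) i : rr n ≤ bb n)) h5
  have hces_bb : Tendsto (fun n => ((bb n : ℕ) : ℝ)⁻¹ * ∑ s ∈ Finset.Icc 1 (bb n), θ s)
      atTop (nhds γ) := hcesaro.comp hbbTop
  have hsum_bb : Tendsto (fun n => Fb n * ∑ s ∈ Finset.Icc 1 (bb n), θ s)
      atTop (nhds (t*γ)) := by
    have h2 := hbbFb.mul hces_bb
    refine h2.congr' ?_
    filter_upwards [hbbTop.eventually_ge_atTop 1] with n hn
    have hne : ((bb n:ℕ):ℝ) ≠ 0 := Nat.cast_ne_zero.mpr (by omega)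
    show (bb n : ℝ) * Fb n * (((bb n : ℕ):ℝ)⁻¹ * ∑ s ∈ Finset.Icc 1 (bb n), θ s) =
      Fb n * ∑ s ∈ Finset.Icc 1 (bb n), θ s
    field_simp
  have hsum_ww : Tendsto (fun n => Fb n * ∑ s ∈ Finset.Icc 1 (ww n), θ s)
      atTop (nhds 0) := by
    apply tendsto_of_tendsto_of_tendsto_of_le_of_le'
      (g := fun _ => (0:ℝ)) (h := fun n => (ww n : ℝ) * Fb n)
    · exact tendsto_const_nhds
    · exact hwwFb
    · refine Filter.Eventually.of_forall (fun n => ?_)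
      have h1 : 0 ≤ ∑ s ∈ Finset.Icc 1 (ww n), θ s :=
        Finset.sum_nonneg (fun s hs => (hth01 s (Finset.mem_Icc.mp hs).1).1)
      exact mul_nonneg (hFbpos n).le h1
    · refine Filter.Eventually.of_forall (fun n => ?_)
      have h1 : ∑ s ∈ Finset.Icc 1 (ww n), θ s ≤ ((ww n : ℕ) : ℝ) := by
        calc ∑ s ∈ Finset.Icc 1 (ww n), θ s ≤ ∑ s ∈ Finset.Icc 1 (ww n), 1 :=
              Finset.sum_le_sum (fun s hs => (hth01 s (Finset.mem_Icc.mp hs).1).2)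
          _ = ((Finset.Icc 1 (ww n)).card : ℝ) := by rw [Finset.sum_const, nsmul_eq_mul, mul_one]
          _ ≤ ((ww n : ℕ) : ℝ) := by
              rw [Nat.card_Icc]
              exact_mod_cast le_refl _
      calc Fb n * ∑ s ∈ Finset.Icc 1 (ww n), θ s ≤ Fb n * ((ww n:ℕ):ℝ) :=
            mul_le_mul_of_nonneg_left h1 (hFbpos n).le
        _ = ((ww n:ℕ):ℝ) * Fb n := mul_comm _ _
  -- eventually ww ≤ bb (indeed also i + p n ≤ bb n)
  have hwwbb : ∀ᶠ n in atTop, ww n ≤ bb n := by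
    filter_upwards [hwwFb.eventually_lt hbbFb ht] with n hn
    have h2 := hFbpos n
    have h3 : (ww n : ℝ) < (bb n : ℝ) := by
      by_contra hcon
      push_neg at hcon
      nlinarith
    exact_mod_cast h3.le

  -- splitting the Cesàro sums
  have hsplitsum : ∀ n, ww n ≤ bb n →
      ∑ s ∈ Finset.Icc (ww n + 1) (bb n), Fb n * Θ s =
        Fb n * ∑ s ∈ Finset.Icc 1 (bb n), θ s - Fb n * ∑ s ∈ Finset.Icc 1 (ww n), θ s := by
    intro n hn
    have hsub : Finset.Icc 1 (ww n) ⊆ Finset.Icc 1 (bb n) := by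
      intro x hx; rw [Finset.mem_Icc] at *; omega
    have hsd : Finset.Icc 1 (bb n) \ Finset.Icc 1 (ww n) = Finset.Icc (ww n + 1) (bb n) := by
      ext x; simp only [Finset.mem_sdiff, Finset.mem_Icc, not_and, not_le]; omega
    have h1 : (∑ s ∈ Finset.Icc (ww n+1) (bb n), θ s) + ∑ s ∈ Finset.Icc 1 (ww n), θ s
        = ∑ s ∈ Finset.Icc 1 (bb n), θ s := by
      rw [← hsd]; exact Finset.sum_sdiff hsub
    have h2 : ∑ s ∈ Finset.Icc (ww n + 1) (bb n), Fb n * Θ s =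
        Fb n * ∑ s ∈ Finset.Icc (ww n+1) (bb n), θ s := by
      rw [Finset.mul_sum]
      refine Finset.sum_congr rfl (fun s hs => ?_)
      rw [Finset.mem_Icc] at hs
      rw [hΘdef]
      simp only [if_neg (by omega : ¬ s = 0)]
    rw [h2, ← h1]
    ring
  have hexp : Tendsto (fun n => ∑ s ∈ Finset.Icc (ww n + 1) (bb n), Fb n * Θ s)
      atTop (nhds (t*γ)) := by
    have h2 := hsum_bb.sub hsum_ww
    rw [sub_zero] at h2
    refine h2.congr' ?_
    filter_upwards [hwwbb] with n hn
    exact (hsplitsum n hn).symm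
  have hHlim : Tendsto (fun n => Real.exp (-(∑ s ∈ Finset.Icc (ww n + 1) (bb n), Fb n * Θ s)))
      atTop (nhds (Real.exp (-(γ*t)))) := by
    have h3 : Tendsto (fun n => Real.exp (-(∑ s ∈ Finset.Icc (ww n + 1) (bb n), Fb n * Θ s)))
        atTop (nhds (Real.exp (-(t*γ)))) :=
      (Real.continuous_exp.tendsto _).comp hexp.neg
    rw [show -(γ*t) = -(t*γ) by ring]
    exact h3
  -- the mixing constant
  set c : ℝ := 2*t/τ + (i:ℝ) + 4 with hcdef
  have hc : 0 < c := by
    have h1 : (0:ℝ) ≤ (i:ℝ) := Nat.cast_nonneg i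
    have h2 : 0 < 2*t/τ := div_pos (by linarith) hτ
    rw [hcdef]; linarith
  set C : ℕ → ℕ := fun n => ⌈c * (n:ℝ)⌉₊ with hCdef
  have hcnFb : Tendsto (fun n : ℕ => c * (n:ℝ) * Fb n) atTop (nhds (c * τ)) := by
    have h2 := hFbar.const_mul c
    refine h2.congr (fun n => ?_)
    ring
  have hbpqFb : Tendsto (fun n => ((bb n + p n + q n : ℕ):ℝ) * Fb n) atTop (nhds t) := by
    have h2 : Tendsto (fun n => (bb n:ℝ)*Fb n + ((p n:ℝ)*Fb n + (q n:ℝ)*Fb n))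
        atTop (nhds t) := by
      simpa using hbbFb.add (hpFb.add hqFb)
    refine h2.congr (fun n => ?_)
    push_cast
    ring
  have ht_lt : t < c * τ := by
    rw [hcdef]
    have h1 : 2*t/τ*τ = 2*t := div_mul_cancel₀ _ hτ.ne'
    have h2 : (0:ℝ) ≤ (i:ℝ) := Nat.cast_nonneg i
    nlinarith
  have hbC : ∀ᶠ n in atTop, bb n + p n + q n ≤ C n := by
    filter_upwards [hbpqFb.eventually_lt hcnFb ht_lt] with n hn
    have h1 : c * (n:ℝ) ≤ ((C n : ℕ) : ℝ) := by
      rw [hCdef]; exact Nat.le_ceil _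
    have h2 := hFbpos n
    have h3 : ((bb n + p n + q n:ℕ):ℝ) < c*(n:ℝ) := by nlinarith
    have h4 := h3.trans_le h1
    exact_mod_cast h4.le
  have hqple : ∀ᶠ n in atTop, q n ≤ p n := by
    filter_upwards [hqp.def one_pos] with n hn
    rw [one_mul, Real.norm_eq_abs, Real.norm_eq_abs,
      abs_of_nonneg (by positivity), abs_of_nonneg (by positivity)] at hn
    exact_mod_cast hn
  have hipbb : ∀ᶠ n in atTop, i + p n ≤ bb n := by
    filter_upwards [hwwbb] with n hn
    have h2 : i + p n + q n ≤ bb n := hn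
    omega
  -- mixing in additive form
  have hmixE : ∀ ε : ℝ, 0 < ε → ∀ᶠ n in atTop,
      ∀ l, 1 ≤ l → l + q n ≤ C n → ∀ E₁ E₂ : Set Ω,
        MeasurableSet[excSigma X (xs n) 1 l] E₁ →
        MeasurableSet[excSigma X (xs n) (l + q n) (C n)] E₂ →
        |pr P (E₁ ∩ E₂) - pr P E₁ * pr P E₂| ≤ ε * pr P E₁ := by
    intro ε hε
    filter_upwards [hmix c hc ε hε] with n hn l hl hlq E₁ E₂ hE₁ hE₂
    rcases eq_or_lt_of_le (pr_nonneg P E₁) with h0 | h0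
    · have hE1z : pr P E₁ = 0 := h0.symm
      have h12 : pr P (E₁ ∩ E₂) = 0 :=
        le_antisymm (by rw [← hE1z]; exact pr_mono P Set.inter_subset_left) (pr_nonneg P _)
      rw [h12, hE1z]
      simp
    · have hlt := hn l hl hlq E₁ E₂ hE₁ hE₂ h0
      have heq : pr P (E₁ ∩ E₂) - pr P E₁ * pr P E₂ =
          (pr P (E₁ ∩ E₂) / pr P E₁ - pr P E₂) * pr P E₁ := by
        field_simp
      rw [heq, abs_mul, abs_of_pos h0]
      exact mul_le_mul_of_nonneg_right hlt.le h0.le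
  -- Block D : front term decoupling
  set Num : ℕ → ℝ := fun n =>
    pr P ({ω | xs n < X i ω} ∩ allLe X (Set.Icc (i+1) (bb n)) (xs n)) with hNumdef
  set G : ℕ → ℝ := fun n =>
    pr P (allLe X (Set.Icc (i + p n + q n + 1) (bb n)) (xs n)) with hGdef
  have hDzero : Tendsto (fun n => Num n / Fb n - θin i n * G n) atTop (nhds 0) := by
    apply tendsto_zero_of_abs_le
    intro ε₀ hε₀
    have hqsm : ∀ᶠ n in atTop, (q n : ℝ) * Fb n ≤ ε₀/3 :=
      hqFb.eventually (eventually_le_nhds (by linarith))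
    filter_upwards [hmixE (ε₀/3) (by linarith), hbC, hqple, hipbb, hqsm]
      with n hmixn hbCn hqpn hipn hqsmn
    have hkey := keyTerm P hmeas (xs n) (Fb n) (ε₀/3) (p n) (q n) (bb n) (C n)
      (fun s => θin s n) (fun s hs => pr_exc n s hs) (hFbpos n) hmixn
      (fun s hs => hthiv n s hs) (fun s => hthi0 n s) (fun s => hthi1 n s)
      hqpn hbCn (by linarith) i hi (Nat.le_add_right i (rr n))
    rw [if_pos hipn] at hkey
    have heq : Num n / Fb n - θin i n * G n = (Num n - Fb n * θin i n * G n)/Fb n := by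
      rw [sub_div, mul_assoc, mul_div_cancel_left₀ _ (hFbpos n).ne']
    rw [heq, abs_div, abs_of_pos (hFbpos n), div_le_iff₀ (hFbpos n)]
    calc |Num n - Fb n * θin i n * G n| ≤ Fb n * ((q n:ℝ) * Fb n + 2*(ε₀/3)) := hkey
      _ ≤ Fb n * ε₀ := by
          apply mul_le_mul_of_nonneg_left _ (hFbpos n).le
          linarith
      _ = ε₀ * Fb n := mul_comm _ _

  -- Block C : Gronwall comparison between G and the exponential
  set Hf : ℕ → ℝ := fun n => Real.exp (-(∑ s ∈ Finset.Icc (ww n + 1) (bb n), Fb n * Θ s))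
    with hHfdef
  have hGH : Tendsto (fun n => G n - Hf n) atTop (nhds 0) := by
    apply tendsto_zero_of_abs_le
    intro ε₀ hε₀
    set K : ℝ := 7*(t+2)*Real.exp (t+2) with hKdef
    have hKpos : 0 < K := by rw [hKdef]; positivity
    set ε : ℝ := ε₀ / K with hεdef
    have hεpos : 0 < ε := div_pos hε₀ hKpos
    have e1 : ∀ᶠ n in atTop, (q n:ℝ)*Fb n ≤ ε := hqFb.eventually (eventually_le_nhds hεpos)
    have e2 : ∀ᶠ n in atTop, (p n:ℝ)*Fb n ≤ ε := hpFb.eventually (eventually_le_nhds hεpos)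
    have e3 : ∀ᶠ n in atTop, Fb n ≤ ε := hFb0.eventually (eventually_le_nhds hεpos)
    have e4 : ∀ᶠ n in atTop, ((p n + q n:ℕ):ℝ)*Fb n ≤ ε := by
      have h4 := hpFb.add hqFb
      rw [add_zero] at h4
      have h5 : Tendsto (fun n => ((p n + q n:ℕ):ℝ)*Fb n) atTop (nhds 0) := by
        refine h4.congr (fun n => ?_)
        push_cast
        ring
      exact h5.eventually (eventually_le_nhds hεpos)
    have e5 : ∀ᶠ n in atTop, (bb n:ℝ)*Fb n ≤ t+1 :=
      hbbFb.eventually (eventually_le_nhds (by linarith))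
    filter_upwards [hmixE ε hεpos, hunif c hc ε hεpos, hbC, hqple, e1, e2, e3, e4, e5]
      with n hmixn hunifn hbCn hqpn he1 he2 he3 he4 he5
    set d : ℕ := p n + q n with hddef
    set lam : ℕ → ℝ := fun s => Fb n * Θ s with hlamdef
    set gg : ℕ → ℝ := fun a => pr P (allLe X (Set.Icc (a+1) (bb n)) (xs n)) with hggdef
    set hh : ℕ → ℝ := fun a => Real.exp (-(∑ s ∈ Finset.Icc (a+1) (bb n), lam s)) with hhhdef
    set Dg : ℝ := (bb n:ℝ) * Fb n * ((q n:ℝ)*Fb n + 3*ε) + (p n:ℝ)*Fb n with hDgdef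
    set Dh : ℝ := ((bb n:ℝ) * Fb n) * ((1 + (d:ℝ)) * Fb n) with hDhdef
    have hDg0 : 0 ≤ Dg := by
      rw [hDgdef]
      have := (hFbpos n).le
      positivity
    have hDh0 : 0 ≤ Dh := by
      rw [hDhdef]
      have := (hFbpos n).le
      positivity
    have hlam0 : ∀ s, 0 ≤ lam s := fun s => mul_nonneg (hFbpos n).le (hΘ0 s)
    have hlamF : ∀ s, lam s ≤ Fb n := by
      intro s
      calc lam s ≤ Fb n * 1 := mul_le_mul_of_nonneg_left (hΘ1 s) (hFbpos n).le
        _ = Fb n := mul_one _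
    have hSlam : ∀ a : ℕ, ∑ s ∈ Finset.Icc (a+1) (bb n), lam s ≤ (bb n:ℝ)*Fb n := by
      intro a
      calc ∑ s ∈ Finset.Icc (a+1) (bb n), lam s
          ≤ ∑ s ∈ Finset.Icc (a+1) (bb n), Fb n := Finset.sum_le_sum (fun s _ => hlamF s)
        _ = ((Finset.Icc (a+1) (bb n)).card : ℝ) * Fb n := by
            rw [Finset.sum_const, nsmul_eq_mul]
        _ ≤ (bb n:ℝ)*Fb n := by
            apply mul_le_mul_of_nonneg_right _ (hFbpos n).le
            rw [Nat.card_Icc]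
            exact_mod_cast (by omega : bb n + 1 - (a+1) ≤ bb n)
    -- recursion for gg
    have hrecg : ∀ a, |gg a - (1 - ∑ s ∈ Finset.Icc (a+1) (bb n), lam s * gg (s+d))| ≤ Dg := by
      intro a
      have hr := recursion P hmeas (xs n) (Fb n) ε (p n) (q n) (bb n) (C n)
        Θ (fun s => θin s n) (fun s hs => pr_exc n s hs) (hFbpos n) hmixn
        (fun s hs => hthiv n s hs) (fun s => hthi0 n s) (fun s => hthi1 n s)
        (by
          intro s hs1 hs2
          have h6 := hunifn s hs1 (by omega : s ≤ C n)
          rw [hΘdef]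
          simp only [if_neg (by omega : ¬ s = 0)]
          exact h6.le)
        hqpn hbCn hεpos.le a
      have hconv : ∀ s : ℕ, lam s * gg (s+d) =
          Fb n * Θ s * pr P (allLe X (Set.Icc (s + p n + q n + 1) (bb n)) (xs n)) := by
        intro s
        have e : s + d + 1 = s + p n + q n + 1 := by omega
        show Fb n * Θ s * pr P (allLe X (Set.Icc (s + d + 1) (bb n)) (xs n)) =
          Fb n * Θ s * pr P (allLe X (Set.Icc (s + p n + q n + 1) (bb n)) (xs n))
        rw [e]
      rw [show (∑ s ∈ Finset.Icc (a+1) (bb n), lam s * gg (s+d)) =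
          ∑ s ∈ Finset.Icc (a+1) (bb n), Fb n * Θ s *
            pr P (allLe X (Set.Icc (s + p n + q n + 1) (bb n)) (xs n)) from
        Finset.sum_congr rfl (fun s _ => hconv s)]
      exact hr
    -- recursion for hh
    have hrech : ∀ a, |hh a - (1 - ∑ s ∈ Finset.Icc (a+1) (bb n), lam s * hh (s+d))| ≤ Dh := by
      intro a
      have hr := hrec_exp lam (bb n) d (Fb n) hlam0 hlamF (hFble1 n) a
      refine hr.trans ?_
      rw [hDhdef]
      apply mul_le_mul_of_nonneg_right (hSlam a)
      have := (hFbpos n).le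
      positivity
    -- combined recursion
    have hrecc : ∀ a, |gg a - hh a| ≤
        (Dg + Dh) + ∑ s ∈ Finset.Icc (a+1) (bb n), lam s * |gg (s+d) - hh (s+d)| := by
      intro a
      have h1 := hrecg a
      have h2 := hrech a
      have e : gg a - hh a =
          (gg a - (1 - ∑ s ∈ Finset.Icc (a+1) (bb n), lam s * gg (s+d))) -
          (hh a - (1 - ∑ s ∈ Finset.Icc (a+1) (bb n), lam s * hh (s+d))) +
          ∑ s ∈ Finset.Icc (a+1) (bb n), (lam s * hh (s+d) - lam s * gg (s+d)) := by
        rw [Finset.sum_sub_distrib]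
        ring
      rw [e]
      have h3 : |∑ s ∈ Finset.Icc (a+1) (bb n), (lam s * hh (s+d) - lam s * gg (s+d))| ≤
          ∑ s ∈ Finset.Icc (a+1) (bb n), lam s * |gg (s+d) - hh (s+d)| := by
        refine (Finset.abs_sum_le_sum_abs _ _).trans ?_
        apply Finset.sum_le_sum
        intro s _
        have e2 : lam s * hh (s+d) - lam s * gg (s+d) = lam s * (hh (s+d) - gg (s+d)) := by ring
        rw [e2, abs_mul, abs_of_nonneg (hlam0 s), abs_sub_comm]
      calc |_ - _ + _| ≤ |_ - _| + |∑ s ∈ Finset.Icc (a+1) (bb n),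
            (lam s * hh (s+d) - lam s * gg (s+d))| := abs_add_le _ _
        _ ≤ (|gg a - (1 - ∑ s ∈ Finset.Icc (a+1) (bb n), lam s * gg (s+d))| +
              |hh a - (1 - ∑ s ∈ Finset.Icc (a+1) (bb n), lam s * hh (s+d))|) +
            ∑ s ∈ Finset.Icc (a+1) (bb n), lam s * |gg (s+d) - hh (s+d)| :=
          add_le_add (abs_sub _ _) h3
        _ ≤ (Dg + Dh) + ∑ s ∈ Finset.Icc (a+1) (bb n), lam s * |gg (s+d) - hh (s+d)| := by
          have := add_le_add h1 h2
          linarith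
    -- base case
    have hbase : ∀ a, bb n ≤ a → gg a = hh a := by
      intro a ha
      have hg1 : gg a = 1 := by
        show pr P (allLe X (Set.Icc (a+1) (bb n)) (xs n)) = 1
        rw [allLe_empty_iff (by omega), pr_univ P]
      have hh1 : hh a = 1 := by
        show Real.exp (-(∑ s ∈ Finset.Icc (a+1) (bb n), lam s)) = 1
        rw [Finset.Icc_eq_empty (by omega)]
        simp
      rw [hg1, hh1]
    have hgr := gronwall gg hh lam (bb n) d (by have := hqpos n; omega : 1 ≤ d) (Dg + Dh)
      (by linarith) hlam0 hbase hrecc (bb n) (ww n) (by omega)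
    -- bound the product
    have hprod : ∏ s ∈ Finset.Icc (ww n + 1) (bb n), (1 + lam s) ≤ Real.exp (t+2) := by
      calc ∏ s ∈ Finset.Icc (ww n + 1) (bb n), (1 + lam s)
          ≤ ∏ s ∈ Finset.Icc (ww n + 1) (bb n), Real.exp (lam s) := by
            apply Finset.prod_le_prod
            · intro s _; have := hlam0 s; linarith
            · intro s _
              have := Real.add_one_le_exp (lam s)
              linarith
        _ = Real.exp (∑ s ∈ Finset.Icc (ww n + 1) (bb n), lam s) := (Real.exp_sum _ _).symm
        _ ≤ Real.exp (t+2) := by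
            apply Real.exp_le_exp.mpr
            have := hSlam (ww n)
            linarith
    have hDbound : Dg + Dh ≤ 7*(t+2)*ε := by
      have hd1 : Dg ≤ (t+1)*(ε + 3*ε) + ε := by
        rw [hDgdef]
        have h7 : (bb n:ℝ) * Fb n * ((q n:ℝ)*Fb n + 3*ε) ≤ (t+1)*(ε + 3*ε) := by
          apply mul_le_mul he5 (by linarith)
            (add_nonneg (mul_nonneg (Nat.cast_nonneg _) (hFbpos n).le) (by linarith))
            (by linarith)
        linarith
      have hd2 : Dh ≤ (t+1)*(ε + ε) := by
        rw [hDhdef]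
        have h8 : (1 + (d:ℝ)) * Fb n = Fb n + (d:ℝ)*Fb n := by ring
        have h9 : ((d:ℕ):ℝ)*Fb n ≤ ε := by
          rw [hddef]
          exact he4
        have h10 : (1 + (d:ℝ)) * Fb n ≤ ε + ε := by
          rw [h8]; linarith
        apply mul_le_mul he5 h10 (mul_nonneg (by positivity) (hFbpos n).le) (by linarith)
      have ht0 := ht
      nlinarith
    -- conclude
    have hfinal : |gg (ww n) - hh (ww n)| ≤ ε₀ := by
      refine hgr.trans ?_
      have hprodnn : 0 ≤ ∏ s ∈ Finset.Icc (ww n + 1) (bb n), (1 + lam s) :=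
        Finset.prod_nonneg (fun s _ => by have := hlam0 s; linarith)
      calc (Dg + Dh) * ∏ s ∈ Finset.Icc (ww n + 1) (bb n), (1 + lam s)
          ≤ (7*(t+2)*ε) * Real.exp (t+2) :=
            mul_le_mul hDbound hprod hprodnn (by positivity)
        _ = K * ε := by rw [hKdef]; ring
        _ = ε₀ := by
            rw [hεdef]
            field_simp
    exact hfinal

  -- final assembly
  have hGlim : Tendsto G atTop (nhds (Real.exp (-(γ*t)))) := by
    have h1 := hGH.add hHlim
    rw [zero_add] at h1
    refine h1.congr (fun n => ?_)
    ring
  have hfeq : ∀ n, pr P ({ω | xs n < X i ω} ∩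
      {ω | ∀ m : ℕ, 1 ≤ m → Fb n * m ≤ t → X (m + i) ω ≤ xs n}) /
      pr P {ω | xs n < X i ω} = Num n / Fb n := by
    intro n
    have hset : {ω | ∀ m : ℕ, 1 ≤ m → Fb n * m ≤ t → X (m + i) ω ≤ xs n} =
        allLe X (Set.Icc (i+1) (bb n)) (xs n) := by
      ext ω
      simp only [Set.mem_setOf_eq, allLe]
      constructor
      · intro h j hj
        rw [Set.mem_Icc] at hj
        have hm1 : 1 ≤ j - i := by omega
        have hm2 : j - i ≤ rr n := by
          have : bb n = i + rr n := rfl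
          omega
        have hmr : ((j - i : ℕ):ℝ) ≤ (rr n : ℝ) := by exact_mod_cast hm2
        have hrt : (rr n : ℝ) ≤ t / Fb n := Nat.floor_le (div_nonneg ht.le (hFbpos n).le)
        have hft : Fb n * ((j - i : ℕ):ℝ) ≤ t := by
          have h3 : ((j - i : ℕ):ℝ) ≤ t / Fb n := hmr.trans hrt
          have h4 := (le_div_iff₀ (hFbpos n)).mp h3
          linarith [h4]
        have := h (j - i) hm1 hft
        have hji : j - i + i = j := by omega
        rwa [hji] at this
      · intro h m hm1 hmt
        have hm2 : m ≤ rr n := by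
          apply Nat.le_floor
          rw [le_div_iff₀ (hFbpos n)]
          linarith [hmt]
        have hj : m + i ∈ Set.Icc (i+1) (bb n) := by
          rw [Set.mem_Icc]
          have : bb n = i + rr n := rfl
          omega
        exact h (m + i) hj
    rw [hset, pr_exc n i hi]
  have hmain : Tendsto (fun n => Num n / Fb n) atTop (nhds (θ i * Real.exp (-(γ*t)))) := by
    have h1 : Tendsto (fun n => θin i n * G n + (Num n / Fb n - θin i n * G n)) atTop
        (nhds (θ i * Real.exp (-(γ*t)) + 0)) :=
      ((hθlim i hi).mul hGlim).add hDzero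
    rw [add_zero] at h1
    refine h1.congr (fun n => ?_)
    ring
  exact hmain.congr (fun n => (hfeq n).symm)
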